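/- Let A = (Q,q0,δ,F) be a quasi-ordered automaton over a preordered alphabet Σ whose order ⊑ on states is a partial order. If A accepts a word w, then there exists a sublist u of w such that A accepts u and the run of u from q0 is strictly increasing: for every i < |u|, δ*(u₁⋯uᵢ, q0) ⊏ δ*(u₁⋯uᵢ₊₁, q0), where ⊏ denotes the strict order associated to ⊑. -/
import Mathlib

/-- Extension of a transition function `δ : Σ × Q → Q` to words:
`δ*(ε,q) = q` and `δ*(wσ,q) = δ(σ, δ*(w,q))`. -/
def deltaStar {σ Q : Type*} (δ : σ → Q → Q) (w : List σ) (q : Q) : Q :=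
  w.foldl (fun p a => δ a p) q

lemma deltaStar_append {σ Q : Type*} (δ : σ → Q → Q) (x y : List σ) (q : Q) :
    deltaStar δ (x ++ y) q = deltaStar δ y (deltaStar δ x q) := by
  simp [deltaStar, List.foldl_append]

lemma deltaStar_aux {σ Q : Type*} [Preorder σ] [PartialOrder Q]
    (q0 : Q) (δ : σ → Q → Q) (F : Set Q)
    (hincr : ∀ (a : σ) (q : Q), q ≤ δ a q) :
    ∀ n (w : List σ), w.length ≤ n → deltaStar δ w q0 ∈ F →
      ∃ u : List σ, u.Sublist w ∧ deltaStar δ u q0 ∈ F ∧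
        ∀ i < u.length,
          deltaStar δ (u.take i) q0 < deltaStar δ (u.take (i + 1)) q0 := by
  intro n
  induction n with
  | zero =>
    intro w hl hw
    have : w = [] := List.length_eq_zero_iff.mp (Nat.le_zero.mp hl)
    subst this
    exact ⟨[], List.Sublist.refl _, hw, by simp⟩
  | succ n ih =>
    intro w hl hw
    by_cases h : ∀ i < w.length,
        deltaStar δ (w.take i) q0 < deltaStar δ (w.take (i + 1)) q0
    · exact ⟨w, List.Sublist.refl _, hw, h⟩
    · push_neg at h
      obtain ⟨i, hi, hns⟩ := h
      have htake : w.take (i + 1) = w.take i ++ [w[i]] := by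
        rw [List.take_succ, List.getElem?_eq_getElem hi]
        rfl
      have hstep : deltaStar δ (w.take (i + 1)) q0
          = δ w[i] (deltaStar δ (w.take i) q0) := by
        rw [htake, deltaStar_append]; rfl
      have hle : deltaStar δ (w.take i) q0 ≤ deltaStar δ (w.take (i + 1)) q0 := by
        rw [hstep]; exact hincr _ _
      have heq : deltaStar δ (w.take (i + 1)) q0 = deltaStar δ (w.take i) q0 :=
        (hle.lt_or_eq.resolve_left hns).symm
      set w' := w.take i ++ w.drop (i + 1) with hw'
      have hdecomp : w = w.take (i + 1) ++ w.drop (i + 1) := (List.take_append_drop _ _).symm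
      have hval : deltaStar δ w' q0 = deltaStar δ w q0 := by
        conv_rhs => rw [hdecomp]
        rw [deltaStar_append, deltaStar_append, heq]
      have hsub : w'.Sublist w := by
        conv_rhs => rw [(List.take_append_drop i w).symm]
        refine List.Sublist.append (List.Sublist.refl _) ?_
        rw [List.drop_eq_getElem_cons hi]
        exact List.sublist_cons_self _ _
      have hlen : w'.length ≤ n := by
        have : w'.length = w.length - 1 := by
          simp [hw', List.length_take, List.length_drop]
          omega
        omega
      obtain ⟨u, husub, huF, hinc⟩ := ih w' hlen (hval ▸ hw)
      exact ⟨u, husub.trans hsub, huF, hinc⟩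

/-- In a quasi-ordered automaton whose state order is a partial order, any
accepted word has an accepted sublist whose run from `q0` is strictly
increasing. -/
theorem accepted_sublist_strictly_increasing_run {σ Q : Type*}
    [Preorder σ] [PartialOrder Q]
    (q0 : Q) (δ : σ → Q → Q) (F : Set Q)
    (hmono : ∀ (a a' : σ) (q q' : Q), a ≤ a' → q ≤ q' → δ a q ≤ δ a' q')
    (hincr : ∀ (a : σ) (q : Q), q ≤ δ a q)
    (hF : IsUpperSet F)
    (w : List σ) (hw : deltaStar δ w q0 ∈ F) :
    ∃ u : List σ, u.Sublist w ∧ deltaStar δ u q0 ∈ F ∧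
      ∀ i < u.length,
        deltaStar δ (u.take i) q0 < deltaStar δ (u.take (i + 1)) q0 := by
  exact deltaStar_aux q0 δ F hincr w.length w le_rfl hw
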